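/- Let A(q,u) be the 5×5 real matrix with rows [3−u, −u/q, −qu, 0, 0], [−qu, 3−u, 0, −u/q, 0], [−u/q, −u/q², 3, 0, −u], [−q²u, −qu, 0, 3, −u], [−u/q, −qu, 0, 0, 3−u], defined for q ≠ 0. Then there exist ε ∈ (0,1) and a continuous function q⁻ : (1−ε, 1) → ℝ such that det A(q⁻(u), u) = 0 and q⁻(u) < 1 for every u ∈ (1−ε, 1), and lim_{u→1⁻} (1 − q⁻(u))/√(1−u) = 3√3/2. -/

import Mathlib

open Filter

noncomputable section

/-- The explicit 5×5 matrix `A(q,u)` from the generating-function analysis. -/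
def matA (q u : ℝ) : Matrix (Fin 5) (Fin 5) ℝ :=
  !![3 - u,     -u / q,       -q * u, 0,      0;
     -q * u,    3 - u,        0,      -u / q, 0;
     -u / q,    -u / q ^ 2,   3,      0,      -u;
     -q ^ 2 * u, -q * u,      0,      3,      -u;
     -u / q,    -q * u,       0,      0,      3 - u]

namespace MatARoot

set_option maxHeartbeats 4000000 in
lemma det_matA (q u : ℝ) (hq : q ≠ 0) :
    (matA q u).det = 243*(1-u) + u^4*(3+u)*(2 - (q^3 + 1/q^3)) := by
  simp [matA, Matrix.det_succ_row_zero, Fin.sum_univ_succ, Fin.succAbove]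
  field_simp
  ring

def cf (u : ℝ) : ℝ := 2 + 243*(1-u)/(u^4*(3+u))
def xf (u : ℝ) : ℝ := (cf u - Real.sqrt ((cf u)^2 - 4))/2
def qf (u : ℝ) : ℝ := (xf u) ^ ((3:ℝ)⁻¹)

variable {u : ℝ}

lemma hD (hu : u ∈ Set.Ioo (1/2 : ℝ) 1) : 0 < u^4*(3+u) := by
  obtain ⟨h1, h2⟩ := hu; positivity

lemma hc2 (hu : u ∈ Set.Ioo (1/2 : ℝ) 1) : 2 < cf u := by
  have h := hD hu
  have : 0 < 243*(1-u)/(u^4*(3+u)) := by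
    apply div_pos _ h
    nlinarith [hu.2]
  unfold cf; linarith

lemma hs2pos (hu : u ∈ Set.Ioo (1/2 : ℝ) 1) : 0 < (cf u)^2 - 4 := by
  nlinarith [hc2 hu]

lemma hx_pos (hu : u ∈ Set.Ioo (1/2 : ℝ) 1) : 0 < xf u := by
  have hc := hc2 hu
  have : Real.sqrt ((cf u)^2 - 4) < cf u :=
    (Real.sqrt_lt' (by linarith)).mpr (by nlinarith)
  unfold xf; linarith

lemma hx_lt1 (hu : u ∈ Set.Ioo (1/2 : ℝ) 1) : xf u < 1 := by
  have hc := hc2 hu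
  have : cf u - 2 < Real.sqrt ((cf u)^2 - 4) := by
    rw [show cf u - 2 = Real.sqrt ((cf u - 2)^2) by rw [Real.sqrt_sq (by linarith)]]
    apply Real.sqrt_lt_sqrt (by positivity)
    nlinarith
  unfold xf; linarith

lemma hq_pos (hu : u ∈ Set.Ioo (1/2 : ℝ) 1) : 0 < qf u :=
  Real.rpow_pos_of_pos (hx_pos hu) _

lemma hq_lt1 (hu : u ∈ Set.Ioo (1/2 : ℝ) 1) : qf u < 1 :=
  Real.rpow_lt_one (hx_pos hu).le (hx_lt1 hu) (by norm_num)

lemma hq3 (hu : u ∈ Set.Ioo (1/2 : ℝ) 1) : (qf u)^3 = xf u := by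
  rw [qf, ← Real.rpow_natCast (xf u ^ ((3:ℝ)⁻¹)) 3, ← Real.rpow_mul (hx_pos hu).le]
  norm_num

lemma hroot (hu : u ∈ Set.Ioo (1/2 : ℝ) 1) :
    (xf u)^2 - cf u * xf u + 1 = 0 := by
  have h := Real.sq_sqrt (hs2pos hu).le
  unfold xf
  nlinarith [h]

lemma hsum (hu : u ∈ Set.Ioo (1/2 : ℝ) 1) :
    (qf u)^3 + 1/(qf u)^3 = cf u := by
  rw [hq3 hu]
  have hx := hx_pos hu
  have hr := hroot hu
  field_simp
  nlinarith [hr]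

lemma det_zero (hu : u ∈ Set.Ioo (1/2 : ℝ) 1) : (matA (qf u) u).det = 0 := by
  rw [det_matA _ _ (hq_pos hu).ne', hsum hu, cf]
  have hD := hD hu
  have hD' := hD.ne'
  have hu0 : u ≠ 0 := by linarith [hu.1]
  have hu3 : 3 + u ≠ 0 := by linarith [hu.1]
  field_simp
  ring

lemma cont_c : ContinuousOn cf (Set.Ioo (1/2 : ℝ) 1) := by
  apply ContinuousOn.add continuousOn_const
  exact ContinuousOn.div (by fun_prop) (by fun_prop) (fun u hu => (hD hu).ne')

lemma cont_x : ContinuousOn xf (Set.Ioo (1/2 : ℝ) 1) := by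
  apply ContinuousOn.div_const
  exact cont_c.sub (((cont_c.pow 2).sub continuousOn_const).sqrt)

lemma cont_q : ContinuousOn qf (Set.Ioo (1/2 : ℝ) 1) :=
  cont_x.rpow_const (fun u _ => Or.inr (by norm_num))

-- Limits
lemma hu1 : Tendsto (fun u : ℝ => u) (nhdsWithin 1 (Set.Iio 1)) (nhds 1) :=
  tendsto_id.mono_right nhdsWithin_le_nhds

lemma hmem : Set.Ioo (1/2 : ℝ) 1 ∈ nhdsWithin (1:ℝ) (Set.Iio 1) :=
  Ioo_mem_nhdsLT_of_mem (by constructor <;> norm_num)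

lemma hDlim : Tendsto (fun u : ℝ => u^4*(3+u)) (nhdsWithin 1 (Set.Iio 1)) (nhds 4) := by
  have : Tendsto (fun u : ℝ => u^4*(3+u)) (nhdsWithin 1 (Set.Iio 1)) (nhds (1^4*(3+1))) :=
    (hu1.pow 4).mul (tendsto_const_nhds.add hu1)
  norm_num at this; exact this

lemma hclim : Tendsto cf (nhdsWithin 1 (Set.Iio 1)) (nhds 2) := by
  have : Tendsto cf (nhdsWithin 1 (Set.Iio 1)) (nhds (2 + 243*(1-1)/4)) := by
    apply tendsto_const_nhds.add
    exact ((tendsto_const_nhds.mul (tendsto_const_nhds.sub hu1)).div hDlim (by norm_num))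
  norm_num at this; exact this

lemma sqrt243 : Real.sqrt 243 = 9 * Real.sqrt 3 := by
  rw [show (243:ℝ) = 9^2*3 by norm_num, Real.sqrt_mul (by positivity), Real.sqrt_sq (by norm_num)]

lemma hAlim : Tendsto (fun u : ℝ => Real.sqrt (243*(cf u + 2)/(u^4*(3+u))))
    (nhdsWithin 1 (Set.Iio 1)) (nhds (9 * Real.sqrt 3)) := by
  have h1 : Tendsto (fun u : ℝ => 243*(cf u + 2)/(u^4*(3+u)))
      (nhdsWithin 1 (Set.Iio 1)) (nhds (243*(2+2)/4)) :=
    (tendsto_const_nhds.mul (hclim.add tendsto_const_nhds)).div hDlim (by norm_num)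
  have h2 := (Real.continuous_sqrt.tendsto (243*(2+2)/4)).comp h1
  norm_num at h2
  rw [sqrt243] at h2
  exact h2

lemma hBlim : Tendsto (fun u : ℝ => 243*Real.sqrt (1-u)/(u^4*(3+u)))
    (nhdsWithin 1 (Set.Iio 1)) (nhds 0) := by
  have hs : Tendsto (fun u : ℝ => Real.sqrt (1-u)) (nhdsWithin 1 (Set.Iio 1)) (nhds 0) := by
    have h0 : Tendsto (fun u : ℝ => (1:ℝ) - u) (nhdsWithin (1:ℝ) (Set.Iio 1)) (nhds 0) := by
      have h1 : Tendsto (fun _ : ℝ => (1:ℝ)) (nhdsWithin (1:ℝ) (Set.Iio 1)) (nhds 1) :=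
        tendsto_const_nhds
      have h := h1.sub hu1
      norm_num at h; exact h
    have h2 := (Real.continuous_sqrt.tendsto 0).comp h0
    simpa [Function.comp_def] using h2
  have : Tendsto (fun u : ℝ => 243*Real.sqrt (1-u)/(u^4*(3+u)))
      (nhdsWithin 1 (Set.Iio 1)) (nhds (243*0/4)) :=
    (tendsto_const_nhds.mul hs).div hDlim (by norm_num)
  norm_num at this; exact this

lemma hc2eq (hu : u ∈ Set.Ioo (1/2 : ℝ) 1) :
    cf u - 2 = 243*(1-u)/(u^4*(3+u)) := by
  unfold cf; ring

lemma key_eq (hu : u ∈ Set.Ioo (1/2 : ℝ) 1) :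
    (1 - xf u)/Real.sqrt (1-u)
      = Real.sqrt (243*(cf u + 2)/(u^4*(3+u)))/2 - (243*Real.sqrt (1-u)/(u^4*(3+u)))/2 := by
  have hδ : (0:ℝ) < 1 - u := by linarith [hu.2]
  have hD := hD hu
  have hc := hc2 hu
  have hsd : (0:ℝ) < Real.sqrt (1-u) := Real.sqrt_pos.mpr hδ
  have hsd2 : Real.sqrt (1-u) ^ 2 = 1 - u := Real.sq_sqrt hδ.le
  -- (c²-4)/(1-u) = 243(c+2)/D
  have harg : 243*(cf u + 2)/(u^4*(3+u)) = ((cf u)^2 - 4)/(1-u) := by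
    have h2 := hc2eq hu
    rw [div_eq_div_iff hD.ne' hδ.ne', show cf u ^ 2 - 4 = (cf u - 2) * (cf u + 2) by ring, h2]
    have hu0 : u ≠ 0 := by linarith [hu.1]
    have hu3 : 3 + u ≠ 0 := by linarith [hu.1]
    field_simp
  have hsqrt : Real.sqrt (243*(cf u + 2)/(u^4*(3+u)))
      = Real.sqrt ((cf u)^2 - 4) / Real.sqrt (1-u) := by
    rw [harg, Real.sqrt_div (hs2pos hu).le]
  rw [hsqrt]
  have hm : Real.sqrt (1-u) * Real.sqrt (1-u) = 1-u := Real.mul_self_sqrt hδ.le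
  have hcm2 : cf u - 2 = 243 * Real.sqrt (1-u) * Real.sqrt (1-u) /(u^4*(3+u)) := by
    rw [hc2eq hu]
    have hD' := hD.ne'
    have hu0 : u ≠ 0 := by linarith [hu.1]
    have hu3 : 3 + u ≠ 0 := by linarith [hu.1]
    field_simp
    linear_combination (-1:ℝ) * hsd2
  have hx : 1 - xf u = (Real.sqrt ((cf u)^2 - 4) - (cf u - 2))/2 := by
    unfold xf; ring
  rw [hx, hcm2]
  field_simp

lemma h1xlim : Tendsto (fun u : ℝ => (1 - xf u)/Real.sqrt (1-u))
    (nhdsWithin 1 (Set.Iio 1)) (nhds (9 * Real.sqrt 3 / 2)) := by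
  have heq : ∀ᶠ u in nhdsWithin (1:ℝ) (Set.Iio 1),
      Real.sqrt (243*(cf u + 2)/(u^4*(3+u)))/2 - (243*Real.sqrt (1-u)/(u^4*(3+u)))/2
        = (1 - xf u)/Real.sqrt (1-u) :=
    eventually_of_mem hmem (fun u hu => (key_eq hu).symm)
  have hlim : Tendsto (fun u : ℝ =>
      Real.sqrt (243*(cf u + 2)/(u^4*(3+u)))/2 - (243*Real.sqrt (1-u)/(u^4*(3+u)))/2)
      (nhdsWithin 1 (Set.Iio 1)) (nhds (9 * Real.sqrt 3 / 2 - 0/2)) :=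
    (hAlim.div_const 2).sub (hBlim.div_const 2)
  norm_num at hlim
  exact hlim.congr' heq

lemma hxlim : Tendsto xf (nhdsWithin 1 (Set.Iio 1)) (nhds 1) := by
  have hs : Tendsto (fun u : ℝ => Real.sqrt ((cf u)^2 - 4)) (nhdsWithin 1 (Set.Iio 1)) (nhds 0) := by
    have h1 : Tendsto (fun u : ℝ => (cf u)^2 - 4) (nhdsWithin 1 (Set.Iio 1)) (nhds (2^2-4)) :=
      (hclim.pow 2).sub tendsto_const_nhds
    have h2 := (Real.continuous_sqrt.tendsto (2^2-4)).comp h1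
    norm_num at h2
    exact h2
  have : Tendsto xf (nhdsWithin 1 (Set.Iio 1)) (nhds ((2-0)/2)) :=
    (hclim.sub hs).div_const 2
  norm_num at this; exact this

lemma hqlim : Tendsto qf (nhdsWithin 1 (Set.Iio 1)) (nhds 1) := by
  have hc : ContinuousAt (fun x : ℝ => x ^ ((3:ℝ)⁻¹)) 1 :=
    Real.continuousAt_rpow_const 1 _ (Or.inl one_ne_zero)
  have := hc.tendsto.comp hxlim
  rw [Real.one_rpow] at this; exact this

theorem main :
    ∃ ε : ℝ, 0 < ε ∧ ε < 1 ∧ ∃ qm : ℝ → ℝ,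
      ContinuousOn qm (Set.Ioo (1 - ε) 1) ∧
      (∀ u ∈ Set.Ioo (1 - ε) 1, qm u ≠ 0 ∧ (matA (qm u) u).det = 0 ∧ qm u < 1) ∧
      Tendsto (fun u : ℝ => (1 - qm u) / Real.sqrt (1 - u)) (nhdsWithin 1 (Set.Iio 1))
        (nhds (3 * Real.sqrt 3 / 2)) := by
  refine ⟨1/2, by norm_num, by norm_num, qf, ?_, ?_, ?_⟩
  · convert cont_q using 2; norm_num
  · intro u hu
    rw [show (1:ℝ) - 1/2 = 1/2 by norm_num] at hu
    exact ⟨(hq_pos hu).ne', det_zero hu, hq_lt1 hu⟩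
  · -- limit
    have hden : Tendsto (fun u : ℝ => 1 + qf u + (qf u)^2)
        (nhdsWithin 1 (Set.Iio 1)) (nhds 3) := by
      have : Tendsto (fun u : ℝ => 1 + qf u + (qf u)^2)
          (nhdsWithin 1 (Set.Iio 1)) (nhds (1 + 1 + 1^2)) :=
        (tendsto_const_nhds.add hqlim).add (hqlim.pow 2)
      norm_num at this; exact this
    have heq : ∀ᶠ u in nhdsWithin (1:ℝ) (Set.Iio 1),
        ((1 - xf u)/Real.sqrt (1-u)) / (1 + qf u + (qf u)^2)
          = (1 - qf u) / Real.sqrt (1 - u) := by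
      apply eventually_of_mem hmem
      intro u hu
      have hfac : 1 - xf u = (1 - qf u) * (1 + qf u + (qf u)^2) := by
        rw [← hq3 hu]; ring
      have hpos : (0:ℝ) < 1 + qf u + (qf u)^2 := by
        have := hq_pos hu; positivity
      rw [hfac]
      field_simp
    have hlim : Tendsto (fun u : ℝ =>
        ((1 - xf u)/Real.sqrt (1-u)) / (1 + qf u + (qf u)^2))
        (nhdsWithin 1 (Set.Iio 1)) (nhds (9 * Real.sqrt 3 / 2 / 3)) :=
      h1xlim.div hden (by norm_num)
    rw [show 9 * Real.sqrt 3 / 2 / 3 = 3 * Real.sqrt 3 / 2 by ring] at hlim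
    exact hlim.congr' heq

end MatARoot


/-- There are `ε ∈ (0,1)` and a continuous function `q⁻` on `(1-ε, 1)`
with `det A(q⁻(u), u) = 0` and `q⁻(u) < 1` for all `u ∈ (1-ε, 1)`, and
`(1 - q⁻(u))/√(1-u) → 3√3/2` as `u → 1⁻`. -/
theorem matA_root_asymptotics :
    ∃ ε : ℝ, 0 < ε ∧ ε < 1 ∧ ∃ qm : ℝ → ℝ,
      ContinuousOn qm (Set.Ioo (1 - ε) 1) ∧
      (∀ u ∈ Set.Ioo (1 - ε) 1, qm u ≠ 0 ∧ (matA (qm u) u).det = 0 ∧ qm u < 1) ∧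
      Tendsto (fun u : ℝ => (1 - qm u) / Real.sqrt (1 - u)) (nhdsWithin 1 (Set.Iio 1))
        (nhds (3 * Real.sqrt 3 / 2)) :=
  MatARoot.main
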